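/- Let T be a CPTP map on a finite-dimensional Hilbert space and H_S a subspace with orthogonal projection Π_S. Then H_S is invariant for T if and only if T*(Π_S) ≥ Π_S (the projection is sub-harmonic). -/

import Mathlib

open Matrix
open scoped ComplexOrder InnerProductSpace

/-- The support `(ker X)ᗮ` of an operator. -/
noncomputable def msupp {n : Type*} [Fintype n] [DecidableEq n]
    (X : Matrix n n ℂ) : Submodule ℂ (EuclideanSpace ℂ n) :=
  (LinearMap.ker (Matrix.toEuclideanLin X))ᗮ

namespace StmtFiveAux

lemma toEuclideanLin_mul {n : Type*} [Fintype n] [DecidableEq n] (A B : Matrix n n ℂ)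
    (v : EuclideanSpace ℂ n) :
    Matrix.toEuclideanLin (A * B) v = Matrix.toEuclideanLin A (Matrix.toEuclideanLin B v) := by
  simp [Matrix.toEuclideanLin_apply, Matrix.mulVec_mulVec]

lemma adj_inner {n : Type*} [Fintype n] [DecidableEq n] (X : Matrix n n ℂ)
    (w v : EuclideanSpace ℂ n) :
    ⟪Matrix.toEuclideanLin Xᴴ w, v⟫_ℂ = ⟪w, Matrix.toEuclideanLin X v⟫_ℂ := by
  rw [EuclideanSpace.inner_eq_star_dotProduct, EuclideanSpace.inner_eq_star_dotProduct,
      Matrix.ofLp_toEuclideanLin_apply, Matrix.ofLp_toEuclideanLin_apply,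
      Matrix.star_mulVec, Matrix.conjTranspose_conjTranspose, dotProduct_comm,
      ← Matrix.dotProduct_mulVec, dotProduct_comm]

lemma trace_form {m n : Type*} [Fintype m] [Fintype n] (B : Matrix m n ℂ) :
    (Bᴴ * B).trace = ∑ j, ∑ i, star (B i j) * B i j := by
  simp [Matrix.trace, Matrix.diag, Matrix.mul_apply, Matrix.conjTranspose_apply]

lemma trace_nonneg' {m n : Type*} [Fintype m] [Fintype n] (B : Matrix m n ℂ) :
    0 ≤ (Bᴴ * B).trace := by
  rw [trace_form]
  exact Finset.sum_nonneg fun j _ => Finset.sum_nonneg fun i _ => star_mul_self_nonneg _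

lemma eq_zero_of_trace {m n : Type*} [Fintype m] [Fintype n] (B : Matrix m n ℂ)
    (h : (Bᴴ * B).trace = 0) : B = 0 := by
  rw [trace_form] at h
  ext i j
  have h1 := (Finset.sum_eq_zero_iff_of_nonneg
    (fun j _ => Finset.sum_nonneg fun i _ => star_mul_self_nonneg (B i j))).mp h j
    (Finset.mem_univ j)
  have h2 := (Finset.sum_eq_zero_iff_of_nonneg
    (fun i _ => star_mul_self_nonneg (B i j))).mp h1 i (Finset.mem_univ i)
  simpa using CStarRing.star_mul_self_eq_zero_iff (B i j) |>.mp h2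

open scoped MatrixOrder in
lemma psd_exists {n : Type*} [Fintype n] [DecidableEq n] {X : Matrix n n ℂ}
    (hX : X.PosSemidef) : ∃ B : Matrix n n ℂ, X = Bᴴ * B := by
  obtain ⟨B, hB⟩ := CStarAlgebra.nonneg_iff_eq_star_mul_self.mp hX.nonneg
  exact ⟨B, hB⟩

lemma psd_trace_nonneg {n : Type*} [Fintype n] [DecidableEq n] {X : Matrix n n ℂ}
    (hX : X.PosSemidef) : 0 ≤ X.trace := by
  obtain ⟨B, rfl⟩ := psd_exists hX
  exact trace_nonneg' B

lemma psd_trace_zero {n : Type*} [Fintype n] [DecidableEq n] {X : Matrix n n ℂ}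
    (hX : X.PosSemidef) (h : X.trace = 0) : X = 0 := by
  obtain ⟨B, rfl⟩ := psd_exists hX
  rw [eq_zero_of_trace B h]
  simp

lemma psd_mul_trace {n : Type*} [Fintype n] [DecidableEq n] {A B : Matrix n n ℂ}
    (hA : A.PosSemidef) (hB : B.PosSemidef) : 0 ≤ (A * B).trace := by
  obtain ⟨C, rfl⟩ := psd_exists hB
  have h1 : (A * (Cᴴ * C)).trace = ((C * A) * Cᴴ).trace := by
    calc (A * (Cᴴ * C)).trace = (Cᴴ * (C * A)).trace := by
          rw [Matrix.trace_mul_comm]; congr 1; noncomm_ring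
      _ = ((C * A) * Cᴴ).trace := Matrix.trace_mul_comm _ _
  rw [h1]
  exact psd_trace_nonneg (hA.mul_mul_conjTranspose_same C)

lemma psd_sum {ι : Type*} {n : Type*} [Fintype n] (s : Finset ι) (f : ι → Matrix n n ℂ)
    (h : ∀ i ∈ s, (f i).PosSemidef) : (∑ i ∈ s, f i).PosSemidef :=
  Finset.sum_induction f _ (fun _ _ ha hb => ha.add hb) Matrix.PosSemidef.zero h

set_option maxHeartbeats 1000000 in
lemma msupp_le_iff {d : ℕ} {X P : Matrix (Fin d) (Fin d) ℂ} (hX : X.PosSemidef)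
    (hProj : P * P = P) (hHerm : Pᴴ = P) :
    msupp X ≤ LinearMap.range (Matrix.toEuclideanLin P) ↔ P * X = X := by
  constructor
  · intro h
    refine (Matrix.toEuclideanLin (𝕜 := ℂ) (m := Fin d) (n := Fin d)).injective
      (LinearMap.ext fun v => ?_)
    rw [toEuclideanLin_mul]
    have hy : Matrix.toEuclideanLin X v ∈ msupp X := by
      rw [msupp, Submodule.mem_orthogonal]
      intro w hw
      rw [LinearMap.mem_ker] at hw
      calc ⟪w, Matrix.toEuclideanLin X v⟫_ℂ
          = ⟪Matrix.toEuclideanLin Xᴴ w, v⟫_ℂ := (adj_inner X w v).symm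
        _ = ⟪Matrix.toEuclideanLin X w, v⟫_ℂ := by rw [hX.1.eq]
        _ = 0 := by rw [hw]; simp
    obtain ⟨u, hu⟩ := h hy
    rw [← hu, ← toEuclideanLin_mul, hProj, hu]
  · intro hPX
    have hXP : X * P = X := by
      have h := congrArg Matrix.conjTranspose hPX
      rwa [Matrix.conjTranspose_mul, hHerm, hX.1.eq] at h
    have hsub : (LinearMap.range (Matrix.toEuclideanLin P))ᗮ ≤
        LinearMap.ker (Matrix.toEuclideanLin X) := by
      intro v hv
      have h0 : ⟪Matrix.toEuclideanLin P v, v⟫_ℂ = 0 :=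
        (Submodule.mem_orthogonal _ _).mp hv _ ⟨v, rfl⟩
      have hPv : Matrix.toEuclideanLin P v = 0 := by
        rw [← inner_self_eq_zero (𝕜 := ℂ)]
        calc ⟪Matrix.toEuclideanLin P v, Matrix.toEuclideanLin P v⟫_ℂ
            = ⟪Matrix.toEuclideanLin Pᴴ v, Matrix.toEuclideanLin P v⟫_ℂ := by rw [hHerm]
          _ = ⟪v, Matrix.toEuclideanLin P (Matrix.toEuclideanLin P v)⟫_ℂ :=
              adj_inner P v (Matrix.toEuclideanLin P v)
          _ = ⟪v, Matrix.toEuclideanLin (P * P) v⟫_ℂ := by rw [toEuclideanLin_mul]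
          _ = ⟪v, Matrix.toEuclideanLin P v⟫_ℂ := by rw [hProj]
          _ = 0 := by rw [← inner_conj_symm, h0, map_zero]
      rw [LinearMap.mem_ker, ← hXP, toEuclideanLin_mul, hPv, map_zero]
    calc msupp X = (LinearMap.ker (Matrix.toEuclideanLin X))ᗮ := rfl
      _ ≤ ((LinearMap.range (Matrix.toEuclideanLin P))ᗮ)ᗮ := Submodule.orthogonal_le hsub
      _ = LinearMap.range (Matrix.toEuclideanLin P) := Submodule.orthogonal_orthogonal _

end StmtFiveAux

open StmtFiveAux in
/-- For a CPTP map `T` with Kraus operators `M_k` and a subspace `H_S` given by an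
orthogonal projection `P`, `H_S` is invariant for `T` iff `T*(P) ≥ P` in the Loewner
order (`P` is sub-harmonic). -/
theorem stmt_5 {d K : ℕ} (M : Fin K → Matrix (Fin d) (Fin d) ℂ)
    (hTP : ∑ k, (M k)ᴴ * M k = 1)
    (P : Matrix (Fin d) (Fin d) ℂ) (hProj : P * P = P) (hHerm : Pᴴ = P) :
    (∀ ρ : Matrix (Fin d) (Fin d) ℂ, ρ.PosSemidef →
        msupp ρ ≤ LinearMap.range (Matrix.toEuclideanLin P) →
        msupp (∑ k, M k * ρ * (M k)ᴴ) ≤ LinearMap.range (Matrix.toEuclideanLin P)) ↔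
      ((∑ k, (M k)ᴴ * P * M k) - P).PosSemidef := by
  have hQH : (1 - P)ᴴ = 1 - P := by
    rw [Matrix.conjTranspose_sub, Matrix.conjTranspose_one, hHerm]
  have hPpsd : P.PosSemidef := by
    have h := Matrix.posSemidef_conjTranspose_mul_self P
    rwa [hHerm, hProj] at h
  constructor
  · -- invariance → sub-harmonic
    intro h
    set X : Matrix (Fin d) (Fin d) ℂ := ∑ k, M k * P * (M k)ᴴ with hXdef
    have hXpsd : X.PosSemidef :=
      psd_sum _ _ fun k _ => hPpsd.mul_mul_conjTranspose_same (M k)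
    have hle := h P hPpsd ((msupp_le_iff hPpsd hProj hHerm).mpr hProj)
    have hPX : P * X = X := (msupp_le_iff hXpsd hProj hHerm).mp hle
    have hQX : (1 - P) * X = 0 := by rw [sub_mul, one_mul, hPX, sub_self]
    have hQXQ : (1 - P) * X * (1 - P) = 0 := by rw [hQX, zero_mul]
    -- expand Q X Q as a sum of N_k N_kᴴ
    have hexp : (1 - P) * X * (1 - P)
        = ∑ k, ((1 - P) * M k * P) * ((1 - P) * M k * P)ᴴ := by
      rw [hXdef, Finset.mul_sum, Finset.sum_mul]
      refine Finset.sum_congr rfl fun k _ => ?_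
      have hCT : ((1 - P) * M k * P)ᴴ = P * ((M k)ᴴ * (1 - P)) := by
        rw [Matrix.conjTranspose_mul, Matrix.conjTranspose_mul, hHerm, hQH]
      rw [hCT]
      calc (1 - P) * (M k * P * (M k)ᴴ) * (1 - P)
          = (1 - P) * (M k * (P * P) * (M k)ᴴ) * (1 - P) := by rw [hProj]
        _ = ((1 - P) * M k * P) * (P * ((M k)ᴴ * (1 - P))) := by noncomm_ring
    -- each N_k vanishes
    have hQMP : ∀ k, (1 - P) * M k * P = 0 := by
      intro k
      have htr0 : ∑ k, (((1 - P) * M k * P) * ((1 - P) * M k * P)ᴴ).trace = 0 := by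
        rw [← Matrix.trace_sum, ← hexp, hQXQ, Matrix.trace_zero]
      have hnn : ∀ k' ∈ Finset.univ (α := Fin K),
          0 ≤ (((1 - P) * M k' * P) * ((1 - P) * M k' * P)ᴴ).trace := by
        intro k' _
        have := trace_nonneg' ((1 - P) * M k' * P)ᴴ
        rwa [Matrix.conjTranspose_conjTranspose] at this
      have h0 := (Finset.sum_eq_zero_iff_of_nonneg hnn).mp htr0 k (Finset.mem_univ k)
      have hN : ((1 - P) * M k * P)ᴴ = 0 := by
        apply eq_zero_of_trace
        rwa [Matrix.conjTranspose_conjTranspose]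
      rwa [Matrix.conjTranspose_eq_zero] at hN
    -- the key algebraic identity
    have key : ∀ k, (M k)ᴴ * P * M k
        = P * ((M k)ᴴ * M k) * P + P * ((M k)ᴴ * M k) * (1 - P)
          + (1 - P) * ((M k)ᴴ * M k) * P
          + (1 - P) * (M k)ᴴ * P * M k * (1 - P) := by
      intro k
      have h1 : P * M k * P = M k * P := by
        have hq := hQMP k
        simp only [sub_mul, one_mul] at hq
        exact (sub_eq_zero.mp hq).symm
      have h2 : P * (M k)ᴴ * P = P * (M k)ᴴ := by
        have hc := congrArg Matrix.conjTranspose h1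
        simp only [Matrix.conjTranspose_mul, hHerm] at hc
        rw [mul_assoc]
        exact hc
      have e : (M k)ᴴ * P * M k
          - (P * ((M k)ᴴ * M k) * P + P * ((M k)ᴴ * M k) * (1 - P)
            + (1 - P) * ((M k)ᴴ * M k) * P
            + (1 - P) * (M k)ᴴ * P * M k * (1 - P))
          = (P * (M k)ᴴ * P - P * (M k)ᴴ) * M k + (M k)ᴴ * (P * M k * P - M k * P)
            - (P * (M k)ᴴ * P - P * (M k)ᴴ) * M k * P := by
        noncomm_ring
      rw [h1, h2, sub_self, sub_self] at e
      simp only [zero_mul, mul_zero, add_zero, sub_zero] at e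
      exact sub_eq_zero.mp e
    have e1 : ∑ k, P * ((M k)ᴴ * M k) * P = P := by
      have : P * (∑ k, (M k)ᴴ * M k) * P = ∑ k, P * ((M k)ᴴ * M k) * P := by
        rw [Finset.mul_sum, Finset.sum_mul]
      rw [← this, hTP, mul_one, hProj]
    have e2 : ∑ k, P * ((M k)ᴴ * M k) * (1 - P) = 0 := by
      have : P * (∑ k, (M k)ᴴ * M k) * (1 - P) = ∑ k, P * ((M k)ᴴ * M k) * (1 - P) := by
        rw [Finset.mul_sum, Finset.sum_mul]
      rw [← this, hTP, mul_one, mul_sub, mul_one, hProj, sub_self]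
    have e3 : ∑ k, (1 - P) * ((M k)ᴴ * M k) * P = 0 := by
      have : (1 - P) * (∑ k, (M k)ᴴ * M k) * P = ∑ k, (1 - P) * ((M k)ᴴ * M k) * P := by
        rw [Finset.mul_sum, Finset.sum_mul]
      rw [← this, hTP, mul_one, sub_mul, one_mul, hProj, sub_self]
    have hsum : (∑ k, (M k)ᴴ * P * M k) - P
        = ∑ k, (1 - P) * (M k)ᴴ * P * M k * (1 - P) := by
      have hs : ∑ k, (M k)ᴴ * P * M k
          = ∑ k, (P * ((M k)ᴴ * M k) * P + P * ((M k)ᴴ * M k) * (1 - P)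
            + (1 - P) * ((M k)ᴴ * M k) * P
            + (1 - P) * (M k)ᴴ * P * M k * (1 - P)) :=
        Finset.sum_congr rfl fun k _ => key k
      rw [hs]
      simp only [Finset.sum_add_distrib]
      rw [e1, e2, e3]
      abel
    rw [hsum]
    have hNform : ∀ k, (1 - P) * (M k)ᴴ * P * M k * (1 - P)
        = (P * M k * (1 - P))ᴴ * (P * M k * (1 - P)) := by
      intro k
      have hCT : (P * M k * (1 - P))ᴴ = (1 - P) * ((M k)ᴴ * P) := by
        rw [Matrix.conjTranspose_mul, Matrix.conjTranspose_mul, hHerm, hQH]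
      rw [hCT]
      calc (1 - P) * (M k)ᴴ * P * M k * (1 - P)
          = (1 - P) * (M k)ᴴ * (P * P) * M k * (1 - P) := by rw [hProj]
        _ = ((1 - P) * ((M k)ᴴ * P)) * (P * M k * (1 - P)) := by noncomm_ring
    have : ∑ k, (1 - P) * (M k)ᴴ * P * M k * (1 - P)
        = ∑ k, (P * M k * (1 - P))ᴴ * (P * M k * (1 - P)) :=
      Finset.sum_congr rfl fun k _ => hNform k
    rw [this]
    exact psd_sum _ _ fun k _ => Matrix.posSemidef_conjTranspose_mul_self _
  · -- sub-harmonic → invariance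
    intro hΔ ρ hρ hsupp
    have hPρ : P * ρ = ρ := (msupp_le_iff hρ hProj hHerm).mp hsupp
    set X : Matrix (Fin d) (Fin d) ℂ := ∑ k, M k * ρ * (M k)ᴴ with hXdef
    have hXpsd : X.PosSemidef :=
      psd_sum _ _ fun k _ => hρ.mul_mul_conjTranspose_same (M k)
    apply (msupp_le_iff hXpsd hProj hHerm).mpr
    have hQQ : (1 - P) * (1 - P) = 1 - P := by
      calc (1 - P) * (1 - P) = 1 - P - P + P * P := by noncomm_ring
        _ = 1 - P := by rw [hProj]; abel
    have hQXQpsd : ((1 - P) * X * (1 - P)).PosSemidef := by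
      have := hXpsd.conjTranspose_mul_mul_same (1 - P)
      rwa [hQH] at this
    -- trace computation
    have htr : ((1 - P) * X * (1 - P)).trace = -((((∑ k, (M k)ᴴ * P * M k) - P) * ρ).trace) := by
      have step1 : ((1 - P) * X * (1 - P)).trace = ((1 - P) * X).trace := by
        calc ((1 - P) * X * (1 - P)).trace
            = ((1 - P) * ((1 - P) * X)).trace := Matrix.trace_mul_comm _ _
          _ = (((1 - P) * (1 - P)) * X).trace := by rw [mul_assoc]
          _ = ((1 - P) * X).trace := by rw [hQQ]
      have step2 : ((1 - P) * X).trace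
          = ((∑ k, (M k)ᴴ * (1 - P) * M k) * ρ).trace := by
        rw [hXdef, Finset.mul_sum, Matrix.trace_sum, Finset.sum_mul, Matrix.trace_sum]
        refine Finset.sum_congr rfl fun k _ => ?_
        calc ((1 - P) * (M k * ρ * (M k)ᴴ)).trace
            = (((1 - P) * (M k * ρ)) * (M k)ᴴ).trace := by congr 1; noncomm_ring
          _ = ((M k)ᴴ * ((1 - P) * (M k * ρ))).trace := Matrix.trace_mul_comm _ _
          _ = ((M k)ᴴ * (1 - P) * M k * ρ).trace := by congr 1; noncomm_ring
      have hS : ∑ k, (M k)ᴴ * (1 - P) * M k = 1 - ∑ k, (M k)ᴴ * P * M k := by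
        have hper : ∀ k ∈ Finset.univ (α := Fin K),
            (M k)ᴴ * (1 - P) * M k = (M k)ᴴ * M k - (M k)ᴴ * P * M k :=
          fun k _ => by noncomm_ring
        rw [Finset.sum_congr rfl hper, Finset.sum_sub_distrib, hTP]
      have hmm : (1 - ∑ k, (M k)ᴴ * P * M k) * ρ
          = -((((∑ k, (M k)ᴴ * P * M k) - P) * ρ)) := by
        rw [sub_mul, one_mul, sub_mul, hPρ, neg_sub]
      rw [step1, step2, hS, hmm, Matrix.trace_neg]
    have h1 : (0 : ℂ) ≤ ((1 - P) * X * (1 - P)).trace := psd_trace_nonneg hQXQpsd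
    have h2 : (0 : ℂ) ≤ ((((∑ k, (M k)ᴴ * P * M k) - P)) * ρ).trace := psd_mul_trace hΔ hρ
    have htr0 : ((1 - P) * X * (1 - P)).trace = 0 := by
      refine le_antisymm ?_ h1
      rw [htr]
      exact neg_nonpos.mpr h2
    have hQXQ : (1 - P) * X * (1 - P) = 0 := psd_trace_zero hQXQpsd htr0
    obtain ⟨C, hC⟩ := psd_exists hXpsd
    have hCQ : (C * (1 - P))ᴴ * (C * (1 - P)) = 0 := by
      have hform : (C * (1 - P))ᴴ * (C * (1 - P)) = (1 - P) * X * (1 - P) := by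
        rw [Matrix.conjTranspose_mul, hQH, hC]
        noncomm_ring
      rw [hform, hQXQ]
    have hCQ0 : C * (1 - P) = 0 := Matrix.conjTranspose_mul_self_eq_zero.mp hCQ
    have hXQ : X * (1 - P) = 0 := by
      rw [hC, mul_assoc, hCQ0, mul_zero]
    have hQX : (1 - P) * X = 0 := by
      have h := congrArg Matrix.conjTranspose hXQ
      rwa [Matrix.conjTranspose_mul, hQH, hXpsd.1.eq, Matrix.conjTranspose_zero] at h
    have := sub_eq_zero.mp (by rwa [sub_mul, one_mul] at hQX : X - P * X = 0)
    exact this.symm
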